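/- Let H be a complex Hilbert space, A_1, …, A_d bounded operators with ∑_{i=1}^d A_i* A_i ≤ I, D := (I − ∑_{i=1}^d A_i* A_i)^{1/2}, X a set, Φ₀ : X → H a map, k₀(x,y) := ⟨Φ₀(x), Φ₀(y)⟩, and for integers 0 ≤ M ≤ N let k̃_M(x,y) := ∑_{|α|<M} ⟨D A_α Φ₀(x), D A_α Φ₀(y)⟩ and R_{N,M}(x) := ∑_{|α|=N} ‖A_α Φ₀(x)‖² + ∑_{M≤|α|<N} ‖D A_α Φ₀(x)‖². Then for all x ∈ X, k₀(x,x) − k̃_M(x,x) = R_{N,M}(x) ≥ 0, and for all x, y ∈ X, |k₀(x,y) − k̃_M(x,y)| ≤ (R_{N,M}(x) R_{N,M}(y))^{1/2}. -/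

import Mathlib

open ContinuousLinearMap

/-- The operator `A_α = A_{i_n} ⋯ A_{i_1}` attached to the word `α = i_1 ⋯ i_n`;
the word is encoded as the list `[i_n, …, i_1]` (most recently applied letter first). -/
noncomputable def Aword {H : Type*} [NormedAddCommGroup H] [InnerProductSpace ℂ H]
    {d : ℕ} (A : Fin d → H →L[ℂ] H) : List (Fin d) → H →L[ℂ] H
  | [] => 1
  | i :: w => A i * Aword A w

section aux
variable {H : Type*} [NormedAddCommGroup H] [InnerProductSpace ℂ H] [CompleteSpace H]
  {d : ℕ} (A : Fin d → H →L[ℂ] H) (D : H →L[ℂ] H)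

lemma defect_step (hDadj : IsSelfAdjoint D)
    (hDsq : D * D = 1 - ∑ i, adjoint (A i) * A i) (u v : H) :
    (inner ℂ u v : ℂ) = (∑ i, (inner ℂ (A i u) (A i v) : ℂ)) + inner ℂ (D u) (D v) := by
  have h1 : (inner ℂ (D u) (D v) : ℂ) = inner ℂ u ((D * D) v) := by
    rw [ContinuousLinearMap.mul_apply, ← hDadj.adjoint_eq, adjoint_inner_left]
    rw [hDadj.adjoint_eq]
  rw [h1, hDsq]
  simp only [sub_apply, ContinuousLinearMap.one_apply, sum_apply, ContinuousLinearMap.mul_apply, inner_sub_right, inner_sum]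
  have h2 : ∀ i, (inner ℂ u ((adjoint (A i)) (A i v)) : ℂ) = inner ℂ (A i u) (A i v) := by
    intro i
    rw [adjoint_inner_right]
  simp_rw [h2]
  ring

lemma key_expansion (hDadj : IsSelfAdjoint D)
    (hDsq : D * D = 1 - ∑ i, adjoint (A i) * A i) (N : ℕ) (u v : H) :
    (inner ℂ u v : ℂ) =
      (∑ α : Fin N → Fin d, (inner ℂ (Aword A (List.ofFn α) u) (Aword A (List.ofFn α) v) : ℂ))
      + ∑ n ∈ Finset.range N, ∑ α : Fin n → Fin d,
          (inner ℂ (D (Aword A (List.ofFn α) u)) (D (Aword A (List.ofFn α) v)) : ℂ) := by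
  induction N with
  | zero =>
      simp [Aword, List.ofFn_zero]
  | succ N ih =>
      rw [Finset.sum_range_succ]
      have hstep :
          (∑ α : Fin (N+1) → Fin d,
            (inner ℂ (Aword A (List.ofFn α) u) (Aword A (List.ofFn α) v) : ℂ))
          = (∑ α : Fin N → Fin d,
              (inner ℂ (Aword A (List.ofFn α) u) (Aword A (List.ofFn α) v) : ℂ))
            - ∑ α : Fin N → Fin d,
                (inner ℂ (D (Aword A (List.ofFn α) u)) (D (Aword A (List.ofFn α) v)) : ℂ) := by
        rw [Fintype.sum_equiv ((Fin.consEquiv (fun _ : Fin (N+1) => Fin d)).symm)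
          (fun α => (inner ℂ (Aword A (List.ofFn α) u) (Aword A (List.ofFn α) v) : ℂ))
          (fun p => (inner ℂ (Aword A (List.ofFn (((Fin.consEquiv (fun _ : Fin (N+1) => Fin d)).symm).symm p)) u)
            (Aword A (List.ofFn (((Fin.consEquiv (fun _ : Fin (N+1) => Fin d)).symm).symm p)) v) : ℂ))
          (fun α => by simp [Fin.tail])]
        rw [Fintype.sum_prod_type]
        have hsymm : ∀ (i : Fin d) (β : Fin N → Fin d),
            List.ofFn (((Fin.consEquiv (fun _ : Fin (N+1) => Fin d)).symm).symm (i, β)) = i :: List.ofFn β := by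
          intro i β
          rw [List.ofFn_succ]
          simp [Fin.consEquiv]
        rw [Finset.sum_comm]
        have : ∀ β : Fin N → Fin d,
            (∑ i : Fin d, (inner ℂ (Aword A (List.ofFn (((Fin.consEquiv (fun _ : Fin (N+1) => Fin d)).symm).symm (i, β))) u)
              (Aword A (List.ofFn (((Fin.consEquiv (fun _ : Fin (N+1) => Fin d)).symm).symm (i, β))) v) : ℂ))
            = (inner ℂ (Aword A (List.ofFn β) u) (Aword A (List.ofFn β) v) : ℂ)
              - inner ℂ (D (Aword A (List.ofFn β) u)) (D (Aword A (List.ofFn β) v)) := by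
          intro β
          simp_rw [hsymm]
          have := defect_step A D hDadj hDsq (Aword A (List.ofFn β) u) (Aword A (List.ofFn β) v)
          simp only [Aword, ContinuousLinearMap.mul_apply]
          linear_combination -this
        simp_rw [this, Finset.sum_sub_distrib]
      rw [hstep, ih]
      ring

lemma abs_sum_inner_le {ι : Type*} (s : Finset ι) (u v : ι → H) :
    ‖∑ i ∈ s, (inner ℂ (u i) (v i) : ℂ)‖ ≤
      Real.sqrt (∑ i ∈ s, ‖u i‖ ^ 2) * Real.sqrt (∑ i ∈ s, ‖v i‖ ^ 2) := by
  calc ‖∑ i ∈ s, (inner ℂ (u i) (v i) : ℂ)‖ ≤ ∑ i ∈ s, ‖(inner ℂ (u i) (v i) : ℂ)‖ :=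
        norm_sum_le _ _
    _ ≤ ∑ i ∈ s, ‖u i‖ * ‖v i‖ :=
        Finset.sum_le_sum fun i _ => norm_inner_le_norm _ _
    _ ≤ _ := Real.sum_mul_le_sqrt_mul_sqrt s _ _

end aux

/-- **Kernel truncation error is measured exactly by the discarded residual energy
(Theorem 5.1).**  Here `k₀(x,y) = ⟨Φ₀x, Φ₀y⟩`, the truncated kernel keeps the defect
blocks of depth `< M`, and `R_{N,M}(x)` is the discarded energy at depth `N` beyond
truncation level `M ≤ N`.  Then `k₀(x,x) - k̃_M(x,x) = R_{N,M}(x) ≥ 0` and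
`|k₀(x,y) - k̃_M(x,y)| ≤ (R_{N,M}(x) R_{N,M}(y))^{1/2}`. -/
theorem kernel_truncation_residual_energy
    {H : Type*} [NormedAddCommGroup H] [InnerProductSpace ℂ H] [CompleteSpace H]
    {X : Type*} {d : ℕ} (A : Fin d → H →L[ℂ] H)
    (hA : ((1 : H →L[ℂ] H) - ∑ i, adjoint (A i) * A i).IsPositive)
    (D : H →L[ℂ] H) (hDpos : D.IsPositive)
    (hDsq : D * D = 1 - ∑ i, adjoint (A i) * A i)
    (Φ : X → H) (M N : ℕ) (hMN : M ≤ N)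
    (k₀ : X → X → ℂ) (hk₀ : ∀ x y, k₀ x y = inner ℂ (Φ x) (Φ y))
    (kt : X → X → ℂ)
    (hkt : ∀ x y, kt x y = ∑ n ∈ Finset.range M, ∑ α : Fin n → Fin d,
      (inner ℂ (D (Aword A (List.ofFn α) (Φ x))) (D (Aword A (List.ofFn α) (Φ y))) : ℂ))
    (R : X → ℝ)
    (hR : ∀ x, R x = (∑ α : Fin N → Fin d, ‖Aword A (List.ofFn α) (Φ x)‖ ^ 2)
      + ∑ n ∈ Finset.Ico M N, ∑ α : Fin n → Fin d,
          ‖D (Aword A (List.ofFn α) (Φ x))‖ ^ 2) :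
    (∀ x : X, k₀ x x - kt x x = (R x : ℂ) ∧ 0 ≤ R x)
    ∧ (∀ x y : X, ‖k₀ x y - kt x y‖ ≤ Real.sqrt (R x * R y)) := by
  have hDadj : IsSelfAdjoint D := hDpos.isSelfAdjoint
  -- The residual identity
  have hres : ∀ x y : X, k₀ x y - kt x y =
      (∑ α : Fin N → Fin d,
        (inner ℂ (Aword A (List.ofFn α) (Φ x)) (Aword A (List.ofFn α) (Φ y)) : ℂ))
      + ∑ n ∈ Finset.Ico M N, ∑ α : Fin n → Fin d,
          (inner ℂ (D (Aword A (List.ofFn α) (Φ x))) (D (Aword A (List.ofFn α) (Φ y))) : ℂ) := by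
    intro x y
    have hkey := key_expansion A D hDadj hDsq N (Φ x) (Φ y)
    rw [← Finset.sum_range_add_sum_Ico
      (fun n => ∑ α : Fin n → Fin d,
        (inner ℂ (D (Aword A (List.ofFn α) (Φ x))) (D (Aword A (List.ofFn α) (Φ y))) : ℂ)) hMN]
      at hkey
    rw [hk₀, hkt, hkey]
    ring
  constructor
  · intro x
    constructor
    · rw [hres x x, hR x]
      push_cast
      congr 1
      · exact Finset.sum_congr rfl fun α _ => by
          rw [inner_self_eq_norm_sq_to_K]; norm_cast
      · refine Finset.sum_congr rfl fun n _ => Finset.sum_congr rfl fun α _ => ?_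
        rw [inner_self_eq_norm_sq_to_K]; norm_cast
    · rw [hR x]; positivity
  · intro x y
    rw [hres x y]
    -- encode as a single finset sum
    set ι := (Fin N → Fin d) ⊕ ((n : ℕ) × (Fin n → Fin d)) with hι
    set s : Finset ι :=
      (Finset.univ : Finset (Fin N → Fin d)).disjSum
        ((Finset.Ico M N).sigma fun n => (Finset.univ : Finset (Fin n → Fin d))) with hs
    set u : X → ι → H := fun z =>
      Sum.elim (fun α => Aword A (List.ofFn α) (Φ z))
        (fun p => D (Aword A (List.ofFn p.2) (Φ z))) with hu
    have hsum : ∀ z w : X,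
        (∑ i ∈ s, (inner ℂ (u z i) (u w i) : ℂ)) =
        (∑ α : Fin N → Fin d,
          (inner ℂ (Aword A (List.ofFn α) (Φ z)) (Aword A (List.ofFn α) (Φ w)) : ℂ))
        + ∑ n ∈ Finset.Ico M N, ∑ α : Fin n → Fin d,
            (inner ℂ (D (Aword A (List.ofFn α) (Φ z))) (D (Aword A (List.ofFn α) (Φ w))) : ℂ) := by
      intro z w
      rw [hs, Finset.sum_disjSum, Finset.sum_sigma]
      simp only [hu, Sum.elim_inl, Sum.elim_inr]
    have hRsum : ∀ z : X, R z = ∑ i ∈ s, ‖u z i‖ ^ 2 := by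
      intro z
      rw [hs, Finset.sum_disjSum, Finset.sum_sigma, hR z]
      simp only [hu, Sum.elim_inl, Sum.elim_inr]
    rw [← hsum x y]
    calc ‖∑ i ∈ s, (inner ℂ (u x i) (u y i) : ℂ)‖
        ≤ Real.sqrt (∑ i ∈ s, ‖u x i‖ ^ 2) * Real.sqrt (∑ i ∈ s, ‖u y i‖ ^ 2) :=
          abs_sum_inner_le s _ _
      _ = Real.sqrt (R x * R y) := by
          rw [← hRsum, ← hRsum, ← Real.sqrt_mul (by rw [hR]; positivity)]
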